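/- For natural numbers a1 < a2 < ... < an, the set {x ∈ [0, 2π] : all cos(ai x) > 0 or all cos(ai x) < 0} has measure at least π/an; equivalently, P(a1,...,an) ≥ 1/(2 an). -/

import Mathlib

open MeasureTheory Real Set

/-- The cosine sign correlation: the normalized measure of the set of `x ∈ [0, 2π]`
where all `cos (aᵢ x)` are positive or all are negative. -/
noncomputable def cosP (n : ℕ) (a : Fin n → ℕ) : ℝ :=
  (volume {x : ℝ | x ∈ Icc 0 (2 * π) ∧
    ((∀ i, 0 < Real.cos (a i * x)) ∨ (∀ i, Real.cos (a i * x) < 0))}).toReal / (2 * π)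

theorem stmt_0 (n : ℕ) (a : Fin (n + 1) → ℕ) (hpos : ∀ i, 0 < a i) (hmono : StrictMono a) :
    cosP (n + 1) a ≥ 1 / (2 * (a (Fin.last n) : ℝ)) := by
  have pi_pos := Real.pi_pos
  set m : ℕ := a (Fin.last n) with hm
  have hm0 : 0 < m := hpos _
  have hmR : (0:ℝ) < m := by exact_mod_cast hm0
  have hmR1 : (1:ℝ) ≤ m := by exact_mod_cast hm0
  have hai : ∀ i, (a i : ℝ) ≤ m := fun i => by
    exact_mod_cast hmono.monotone (Fin.le_last i)
  set ε : ℝ := π / (2 * m) with hε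
  have hε0 : 0 < ε := by positivity
  have hεle : ε ≤ π / 2 := by
    rw [hε, div_le_div_iff₀ (by positivity) (by norm_num)]
    nlinarith
  set S : Set ℝ := {x : ℝ | x ∈ Icc 0 (2 * π) ∧
    ((∀ i, 0 < Real.cos (a i * x)) ∨ (∀ i, Real.cos (a i * x) < 0))} with hS
  -- cos positivity for small t
  have key : ∀ t : ℝ, 0 ≤ t → t < ε → ∀ i, 0 < Real.cos (a i * t) := by
    intro t ht htε i
    have hi0 : (0:ℝ) < a i := by exact_mod_cast hpos i
    have h1 : (a i : ℝ) * t < π / 2 := by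
      calc (a i : ℝ) * t ≤ m * t := by nlinarith [hai i]
        _ < m * ε := by nlinarith
        _ = π / 2 := by rw [hε]; field_simp
    apply Real.cos_pos_of_mem_Ioo
    constructor
    · nlinarith
    · exact h1
  have hsub : Ico 0 ε ∪ Ioc (2 * π - ε) (2 * π) ⊆ S := by
    rintro x (⟨hx0, hxε⟩ | ⟨hx1, hx2⟩)
    · refine ⟨⟨hx0, by nlinarith⟩, Or.inl fun i => key x hx0 hxε i⟩
    · refine ⟨⟨by nlinarith, hx2⟩, Or.inl fun i => ?_⟩
      have hxr : (a i : ℝ) * x = (a i : ℝ) * (2 * π) - (a i : ℝ) * (2 * π - x) := by ring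
      rw [hxr, Real.cos_nat_mul_two_pi_sub]
      exact key (2 * π - x) (by linarith) (by linarith) i
  have hdisj : Disjoint (Ico (0:ℝ) ε) (Ioc (2 * π - ε) (2 * π)) := by
    rw [Set.disjoint_left]
    rintro x ⟨hx0, hxε⟩ ⟨hx1, hx2⟩
    nlinarith
  have hvol : volume (Ico (0:ℝ) ε ∪ Ioc (2 * π - ε) (2 * π)) = ENNReal.ofReal (2 * ε) := by
    rw [measure_union hdisj measurableSet_Ioc, Real.volume_Ico, Real.volume_Ioc]
    rw [← ENNReal.ofReal_add (by linarith) (by nlinarith)]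
    congr 1
    ring_nf
  have hle : ENNReal.ofReal (2 * ε) ≤ volume S := by
    rw [← hvol]; exact measure_mono hsub
  have hfin : volume S ≠ ⊤ := by
    apply ne_top_of_le_ne_top _ (measure_mono (fun x hx => hx.1 : S ⊆ Icc 0 (2 * π)))
    simp [Real.volume_Icc]
    exact ENNReal.mul_ne_top (by norm_num) ENNReal.ofReal_ne_top
  have htr : 2 * ε ≤ (volume S).toReal := by
    have := ENNReal.toReal_mono hfin hle
    rwa [ENNReal.toReal_ofReal (by linarith)] at this
  have h2π : (0:ℝ) < 2 * π := by linarith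
  rw [ge_iff_le, cosP]
  rw [div_le_div_iff₀ (by positivity) h2π]
  have hεval : 2 * ε = π / m := by rw [hε]; field_simp
  calc 1 * (2 * π) = 2 * (m : ℝ) * (2 * ε) := by rw [hεval]; field_simp
    _ ≤ 2 * (m : ℝ) * (volume S).toReal := by nlinarith
    _ = (volume S).toReal * (2 * (m : ℝ)) := by ring
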